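/- Let S be a string, σ a character, A and B strings, and k ≥ 1 an integer. Then the string AσB is a k-repeating subsequence of S if and only if there exists a σ-split point for A and B in S. -/

import Mathlib

open List

variable {α : Type*}

/-- The substring of `S` from 1-indexed position `a` to position `b`, inclusive
(empty when `a > b`). -/
def substr (S : List α) (a b : ℕ) : List α := (S.drop (a - 1)).take (b + 1 - a)

/-- `X` is a square subsequence of `S`. -/
def IsSquareSubseq (S X : List α) : Prop := (∃ Y, X = Y ++ Y) ∧ X <+ S

/-- `X` is a maximal square subsequence of `S`: it is a square subsequence of `S` and
is not a proper subsequence of any other square subsequence of `S`. -/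
def IsMaxSquareSubseq (S X : List α) : Prop :=
  IsSquareSubseq S X ∧ ∀ X', IsSquareSubseq S X' → X <+ X' → X' = X

/-- The square subsequence `Y ++ Y` is right-extendable in `S`. -/
def RightExtendable (S Y : List α) : Prop := ∃ y : α, Y ++ [y] ++ Y ++ [y] <+ S

/-- The square subsequence `Y ++ Y` is left-extendable in `S`. -/
def LeftExtendable (S Y : List α) : Prop := ∃ y : α, [y] ++ Y ++ [y] ++ Y <+ S

/-- The square subsequence `Y ++ Y` is inner-extendable in `S`. -/
def InnerExtendable (S Y : List α) : Prop :=
  ∃ (y : α) (Y₁ Y₂ : List α), Y = Y₁ ++ Y₂ ∧ Y₁ ≠ [] ∧ Y₂ ≠ [] ∧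
    Y₁ ++ [y] ++ Y₂ ++ Y₁ ++ [y] ++ Y₂ <+ S

/-- `X` is a `k`-repeating subsequence of `S`: the `k`-fold concatenation of `X`
is a subsequence of `S`. -/
def IsKRep (k : ℕ) (S X : List α) : Prop := (List.replicate k X).flatten <+ S

/-- `X` is a maximal `k`-repeating subsequence of `S`: the only `k`-repeating
subsequence of `S` having `X` as a subsequence is `X` itself. -/
def IsMaxKRep (k : ℕ) (S X : List α) : Prop :=
  IsKRep k S X ∧ ∀ Y, IsKRep k S Y → X <+ Y → Y = X

/-- A `σ`-split point for `A` and `B` in `S`: a strictly increasing `k`-tuple of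
1-indexed positions of `S` carrying `σ`, such that around each position `p i` one
can place `A` immediately to its left and `B` immediately to its right within a
window `[a i, b i]`, with consecutive windows disjoint (`b i < a (i+1)`). -/
def IsSplitPoint (S : List α) (σ : α) (A B : List α) (k : ℕ) (p : Fin k → ℕ) : Prop :=
  StrictMono p ∧
  (∀ i, 1 ≤ p i ∧ p i ≤ S.length ∧ substr S (p i) (p i) = [σ]) ∧
  ∃ a b : Fin k → ℕ,
    (∀ i, 1 ≤ a i ∧ a i ≤ p i ∧ p i ≤ b i ∧ b i ≤ S.length ∧
      A <+ substr S (a i) (p i - 1) ∧ B <+ substr S (p i + 1) (b i)) ∧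
    ∀ i j : Fin k, (i : ℕ) + 1 = (j : ℕ) → b i < a j

/-- A `σ`-start for `σ^r` in `S`: a strictly increasing `k`-tuple of 1-indexed
positions of `S` carrying `σ`, such that (with `p (k+1) = |S| + 1`) the string
`σ^r` is a subsequence of `S[p j .. p (j+1) − 1]` for every `j`. -/
def IsSigmaStart (S : List α) (σ : α) (r k : ℕ) (p : Fin k → ℕ) : Prop :=
  StrictMono p ∧
  (∀ i, 1 ≤ p i ∧ p i ≤ S.length ∧ substr S (p i) (p i) = [σ]) ∧
  ∀ i : Fin k, List.replicate r σ <+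
    substr S (p i) ((if h : (i : ℕ) + 1 < k then p ⟨(i : ℕ) + 1, h⟩ else S.length + 1) - 1)

/-- `W` is a maximal common subsequence of `T₁` and `T₂` containing `X`. -/
def IsMCSContaining (T₁ T₂ X W : List α) : Prop :=
  X <+ W ∧ W <+ T₁ ∧ W <+ T₂ ∧ ∀ W', W <+ W' → W' <+ T₁ → W' <+ T₂ → W' = W

/-- `p` is the 1-indexed position of the `t`-th occurrence (1-indexed `t`) of `σ` in `S`:
`S[p] = σ` and exactly `t - 1` occurrences of `σ` lie strictly before position `p`. -/
def NthOccPos [DecidableEq α] (S : List α) (σ : α) (t p : ℕ) : Prop :=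
  1 ≤ p ∧ p ≤ S.length ∧ substr S p p = [σ] ∧ (substr S 1 (p - 1)).count σ = t - 1

/-- `j` is the leftmost anchor of `Y` with position `i` in `S`: the smallest index `j`
such that `Y` is a subsequence of `S[i..j]`. -/
def LeftmostAnchor (S Y : List α) (i j : ℕ) : Prop :=
  Y <+ substr S i j ∧ ∀ j', Y <+ substr S i j' → j ≤ j'

/-- `Y` is an Algorithm-1 output for `S` and `σ` (Algorithm 1 of the paper), where
`ℓ = count σ S` and `e = ⌊ℓ/2⌋`. -/
def Alg1Output [DecidableEq α] (S : List α) (σ : α) (Y : List α) : Prop :=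
  ∃ (i1 ie1 : ℕ) (Y₀ : List α),
    NthOccPos S σ 1 i1 ∧
    NthOccPos S σ (S.count σ / 2 + 1) ie1 ∧
    IsMCSContaining (substr S i1 (ie1 - 1)) (substr S ie1 S.length)
      (List.replicate (S.count σ / 2) σ) Y₀ ∧
    ((Y = Y₀ ∧ (Odd (S.count σ) → ∀ ie2, NthOccPos S σ (S.count σ / 2 + 2) ie2 →
        ¬ Y₀ <+ substr S ie2 S.length)) ∨
     (Odd (S.count σ) ∧ ∃ ie2, NthOccPos S σ (S.count σ / 2 + 2) ie2 ∧
        Y₀ <+ substr S ie2 S.length ∧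
        IsMCSContaining (substr S i1 (ie2 - 1)) (substr S ie2 S.length) Y₀ Y))

/-- `Z` is an Algorithm-2 output for `S` and `σ` built from the Algorithm-1 output `Y`
(Algorithm 2 of the paper). -/
def Alg2Output [DecidableEq α] (S : List α) (σ : α) (Y Z : List α) : Prop :=
  ∃ (i1 i2 j1 : ℕ) (Z₀ : List α),
    NthOccPos S σ 1 i1 ∧ NthOccPos S σ 2 i2 ∧
    LeftmostAnchor S Y i1 j1 ∧
    IsMCSContaining (substr S 1 j1) (substr S (j1 + 1) S.length) Y Z₀ ∧
    ((Z = Z₀ ∧ (Odd (S.count σ) → ∀ j2, LeftmostAnchor S Y i2 j2 →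
        ¬ Z₀ <+ substr S (j2 + 1) S.length)) ∨
     (Odd (S.count σ) ∧ ∃ j2, LeftmostAnchor S Y i2 j2 ∧
        Z₀ <+ substr S (j2 + 1) S.length ∧
        IsMCSContaining (substr S 1 j2) (substr S (j2 + 1) S.length) Z₀ Z))

/-- Splitting a substring at an inner point. -/
lemma substr_split (S : List α) {a c b : ℕ} (h1 : 1 ≤ a) (h2 : a ≤ c + 1) (h3 : c ≤ b) :
    substr S a b = substr S a c ++ substr S (c + 1) b := by
  rw [substr, substr, substr,
    show b + 1 - a = (c + 1 - a) + (b + 1 - (c + 1)) by omega, List.take_add]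
  congr 2
  rw [List.drop_drop]
  congr 1
  omega

/-- In a chain of windows, earlier windows end before later windows start. -/
lemma chain_lt {k : ℕ} {a b : Fin k → ℕ}
    (hab : ∀ i, a i ≤ b i + 1)
    (hc : ∀ i j : Fin k, (i : ℕ) + 1 = (j : ℕ) → b i < a j) :
    ∀ i j : Fin k, (i : ℕ) < (j : ℕ) → b i < a j := by
  have key : ∀ d (i j : Fin k), (j : ℕ) = (i : ℕ) + d + 1 → b i < a j := by
    intro d
    induction d with
    | zero => intro i j h; exact hc i j (by omega)
    | succ d ih =>
      intro i j h
      have hm : (i : ℕ) + d + 1 < k := by have := j.isLt; omega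
      have h1 : b i < a ⟨(i : ℕ) + d + 1, hm⟩ := ih i _ rfl
      have h2 : b ⟨(i : ℕ) + d + 1, hm⟩ < a j := hc _ j (by simpa using by omega)
      have := hab ⟨(i : ℕ) + d + 1, hm⟩
      omega
  intro i j hij
  exact key ((j : ℕ) - (i : ℕ) - 1) i j (by omega)

/-- Embedding a chain of words placed in pairwise-disjoint consecutive windows. -/
lemma chain_sublist (S : List α) :
    ∀ (k : ℕ) (a b : Fin k → ℕ) (X : Fin k → List α) (t : ℕ),
      (∀ i, 1 ≤ a i ∧ a i ≤ b i + 1 ∧ X i <+ substr S (a i) (b i)) →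
      (∀ i j : Fin k, (i : ℕ) + 1 = (j : ℕ) → b i < a j) →
      (∀ i, t < a i) →
      (List.ofFn X).flatten <+ S.drop t := by
  intro k
  induction k with
  | zero => intro a b X t _ _ _; simp
  | succ k ih =>
    intro a b X t h hc ht
    have htail : (List.ofFn fun i : Fin k => X i.succ).flatten <+ S.drop (b 0) := by
      refine ih (fun i => a i.succ) (fun i => b i.succ) _ (b 0)
        (fun i => h i.succ) (fun i j hij => hc i.succ j.succ (by simpa using by omega))
        (fun i => ?_)
      exact chain_lt (fun i => (h i).2.1) hc 0 i.succ (by simp)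
    rw [List.ofFn_succ, List.flatten_cons]
    obtain ⟨ha1, hab, hX⟩ := h 0
    calc X 0 ++ (List.ofFn fun i : Fin k => X i.succ).flatten
        <+ substr S (a 0) (b 0) ++ S.drop (b 0) := Sublist.append hX htail
      _ = S.drop (a 0 - 1) := by
          have hb : S.drop (b 0) = (S.drop (a 0 - 1)).drop (b 0 + 1 - a 0) := by
            rw [List.drop_drop]; congr 1; omega
          rw [substr, hb, List.take_append_drop]
      _ <+ S.drop t := by
          have ht0 := ht 0
          have h2 : S.drop (a 0 - 1) = (S.drop t).drop (a 0 - 1 - t) := by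
            rw [List.drop_drop]; congr 1; omega
          rw [h2]
          exact List.drop_sublist _ _

/-- Auxiliary forward direction, relativized to a suffix of `S`. -/
lemma krep_forward_aux (S A B : List α) (σ : α) :
    ∀ (k t : ℕ), (List.replicate k (A ++ [σ] ++ B)).flatten <+ S.drop t →
    ∃ p a b : Fin k → ℕ,
      StrictMono p ∧
      (∀ i, 1 ≤ p i ∧ p i ≤ S.length ∧ substr S (p i) (p i) = [σ]) ∧
      (∀ i, t < a i ∧ 1 ≤ a i ∧ a i ≤ p i ∧ p i ≤ b i ∧ b i ≤ S.length ∧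
        A <+ substr S (a i) (p i - 1) ∧ B <+ substr S (p i + 1) (b i)) ∧
      (∀ i j : Fin k, (i : ℕ) + 1 = (j : ℕ) → b i < a j) := by
  intro k
  induction k with
  | zero =>
    intro t _
    exact ⟨Fin.elim0, Fin.elim0, Fin.elim0, fun i => i.elim0, fun i => i.elim0,
      fun i => i.elim0, fun i => i.elim0⟩
  | succ k ih =>
    intro t hsub
    rw [List.replicate_succ, List.flatten_cons] at hsub
    rw [List.append_assoc, List.append_assoc] at hsub
    obtain ⟨T1, R, hTR, hA, hR⟩ := List.append_sublist_iff.mp hsub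
    obtain ⟨R1, R2, hRR, hσ, hBrest⟩ := List.append_sublist_iff.mp hR
    have hσmem : σ ∈ R1 := (List.singleton_sublist.mp hσ)
    obtain ⟨U, V, hUV⟩ := List.append_of_mem hσmem
    obtain ⟨W1, W2, hW, hB, hrest⟩ := List.append_sublist_iff.mp hBrest
    subst hUV hRR hW
    obtain ⟨Q, hQ⟩ : ∃ Q, Q = T1 ++ U := ⟨_, rfl⟩
    have hdropt : S.drop t = Q ++ σ :: (V ++ (W1 ++ W2)) := by
      rw [hTR, hQ]; simp
    obtain ⟨p0, hp0⟩ : ∃ p0, p0 = t + Q.length + 1 := ⟨_, rfl⟩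
    obtain ⟨b0, hb0⟩ : ∃ b0, b0 = p0 + (V.length + W1.length) := ⟨_, rfl⟩
    have hdrop1 : S.drop (t + Q.length) = σ :: (V ++ (W1 ++ W2)) := by
      rw [← List.drop_drop, hdropt]
      exact List.drop_left
    have hlen : S.length - (t + Q.length) = (V ++ (W1 ++ W2)).length + 1 := by
      have := congrArg List.length hdrop1
      simpa using this
    simp only [List.length_append] at hlen
    have hp0le : p0 ≤ S.length := by omega
    have hb0le : b0 ≤ S.length := by omega
    have hdropp0 : S.drop p0 = V ++ (W1 ++ W2) := by
      rw [hp0, ← List.drop_drop, hdrop1]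
      rfl
    have hsubp0 : substr S p0 p0 = [σ] := by
      rw [substr, show p0 - 1 = t + Q.length by omega, hdrop1,
        show p0 + 1 - p0 = 1 by omega]
      rfl
    have hsubA : A <+ substr S (t + 1) (p0 - 1) := by
      rw [substr, show t + 1 - 1 = t from rfl,
        show p0 - 1 + 1 - (t + 1) = Q.length by omega, hdropt, List.take_left]
      rw [hQ]
      exact hA.trans (List.sublist_append_left _ _)
    have hsubB : B <+ substr S (p0 + 1) b0 := by
      rw [substr, show p0 + 1 - 1 = p0 from rfl,
        show b0 + 1 - (p0 + 1) = (V ++ W1).length by simp [List.length_append]; omega,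
        hdropp0, ← List.append_assoc, List.take_left]
      exact hB.trans (List.sublist_append_right _ _)
    have hdropb0 : S.drop b0 = W2 := by
      rw [hb0, ← List.drop_drop, hdropp0, ← List.append_assoc, ← List.length_append,
        List.drop_left]
    obtain ⟨p', a', b', hmono', hpos', hwin', hcons'⟩ := ih b0 (hdropb0 ▸ hrest)
    have hp0b0 : p0 ≤ b0 := by omega
    refine ⟨Fin.cons p0 p', Fin.cons (t + 1) a', Fin.cons b0 b', ?_, ?_, ?_, ?_⟩
    · intro i j hij
      induction i using Fin.cases with
      | zero =>
        induction j using Fin.cases with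
        | zero => exact absurd hij (lt_irrefl _)
        | succ j =>
          simp only [Fin.cons_zero, Fin.cons_succ]
          have h1 := (hwin' j).1
          have h2 := (hwin' j).2.2.1
          omega
      | succ i =>
        induction j using Fin.cases with
        | zero =>
          exact absurd (Fin.lt_def.mp hij) (by simp)
        | succ j =>
          simp only [Fin.cons_succ]
          exact hmono' (Fin.succ_lt_succ_iff.mp hij)
    · intro i
      induction i using Fin.cases with
      | zero =>
        simp only [Fin.cons_zero]
        exact ⟨by omega, hp0le, hsubp0⟩
      | succ i =>
        simp only [Fin.cons_succ]
        exact hpos' i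
    · intro i
      induction i using Fin.cases with
      | zero =>
        simp only [Fin.cons_zero]
        exact ⟨by omega, by omega, by omega, hp0b0, hb0le, hsubA, hsubB⟩
      | succ i =>
        simp only [Fin.cons_succ]
        obtain ⟨h1, h2, h3, h4, h5, h6, h7⟩ := hwin' i
        exact ⟨by omega, h2, h3, h4, h5, h6, h7⟩
    · intro i j hij
      induction i using Fin.cases with
      | zero =>
        induction j using Fin.cases with
        | zero => simp at hij
        | succ j =>
          simp only [Fin.cons_zero, Fin.cons_succ]
          exact (hwin' j).1
      | succ i =>
        induction j using Fin.cases with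
        | zero => simp at hij
        | succ j =>
          simp only [Fin.cons_succ]
          refine hcons' i j ?_
          simp only [Fin.val_succ] at hij
          omega

/-- `AσB` is a `k`-repeating subsequence of `S` iff there exists a
`σ`-split point for `A` and `B` in `S`. -/
theorem krep_iff_exists_splitPoint {α : Type*} (S A B : List α) (σ : α) (k : ℕ)
    (hk : 1 ≤ k) :
    IsKRep k S (A ++ [σ] ++ B) ↔ ∃ p : Fin k → ℕ, IsSplitPoint S σ A B k p := by
  constructor
  · intro h
    obtain ⟨p, a, b, hmono, hpos, hwin, hcons⟩ :=
      krep_forward_aux S A B σ k 0 (by simpa [IsKRep] using h)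
    exact ⟨p, hmono, hpos, a, b, fun i => ⟨(hwin i).2.1, (hwin i).2.2.1, (hwin i).2.2.2.1,
      (hwin i).2.2.2.2.1, (hwin i).2.2.2.2.2.1, (hwin i).2.2.2.2.2.2⟩, hcons⟩
  · rintro ⟨p, hmono, hpos, a, b, hwin, hcons⟩
    have hX : ∀ i : Fin k, A ++ [σ] ++ B <+ substr S (a i) (b i) := by
      intro i
      obtain ⟨hp1, hpS, hpσ⟩ := hpos i
      obtain ⟨ha1, hap, hpb, hbS, hA, hB⟩ := hwin i
      have hσsub : [σ] <+ substr S (p i) (p i) := by simp [hpσ]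
      rw [List.append_assoc A [σ] B,
        substr_split S ha1 (by omega) (show p i - 1 ≤ b i by omega),
        substr_split S (show 1 ≤ p i - 1 + 1 by omega) (show p i - 1 + 1 ≤ p i + 1 by omega)
          (show p i ≤ b i from hpb),
        show p i - 1 + 1 = p i from by omega]
      exact Sublist.append hA (Sublist.append hσsub hB)
    have := chain_sublist S k a b (fun _ => A ++ [σ] ++ B) 0
      (fun i => ⟨(hwin i).1, by have := (hwin i).2.1; have := (hwin i).2.2.1; omega, hX i⟩)
      hcons (fun i => (hwin i).1)
    rw [IsKRep]
    simpa [List.ofFn_const] using this
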